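/- (Theorem 3, moving-average case) For every event list L and every j ∈ Fin n, the averaged block of the folded memory equals the order-k moving average (with zero padding) of the event features sent to j: (1/k) · Σ_{r ∈ Fin k} s_L(j, r) = (1/k) · Σ_{x=0}^{k−1} e_j^{(M_j − x)}. -/

import Mathlib

/-- The shift-and-insert update: `shiftInsert s (j, e)` writes `e` into slot 0
of block `j`, shifts the previous contents of block `j` down by one slot
(discarding the last), and leaves all other blocks unchanged. -/
def shiftInsert {n k : ℕ} [NeZero k] (s : Fin n × Fin k → ℝ)
    (je : Fin n × ℝ) : Fin n × Fin k → ℝ := fun p =>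
  if p = (je.1, 0) then je.2
  else if p.1 = je.1 then s (je.1, p.2 - 1)
  else s p

/-- `sFold n k L` : the left fold of the shift-and-insert update over the
event list `L`, starting from the zero memory vector. -/
def sFold (n k : ℕ) [NeZero k] (L : List (Fin n × ℝ)) : Fin n × Fin k → ℝ :=
  L.foldl shiftInsert 0

/-- `countDest j L` : the number `M_j` of events in `L` with destination `j`. -/
def countDest {n : ℕ} (j : Fin n) (L : List (Fin n × ℝ)) : ℕ :=
  (L.filter fun ev => ev.1 = j).length

/-- `featAt j L l` : the feature `e_j^{(l)}` of the `l`-th event of `L` with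
destination `j` (1-indexed, in order of occurrence), with `e_j^{(0)} := 0`
(covering the convention `e_j^{(l)} := 0` for `l ≤ 0`, since natural
subtraction truncates at `0`). -/
def featAt {n : ℕ} (j : Fin n) (L : List (Fin n × ℝ)) : ℕ → ℝ
  | 0 => 0
  | l + 1 => ((L.filter fun ev => ev.1 = j).map Prod.snd).getD l 0

lemma featAt_append_le {n : ℕ} (j : Fin n) (L : List (Fin n × ℝ)) (a : Fin n × ℝ)
    (l : ℕ) (hl : l ≤ countDest j L) :
    featAt j (L ++ [a]) l = featAt j L l := by
  cases l with
  | zero => rfl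
  | succ m =>
    simp only [featAt, List.filter_append, List.map_append]
    rw [List.getD_append]
    simp only [List.length_map]
    exact Nat.lt_of_succ_le hl

lemma sFold_slot (n k : ℕ) [NeZero n] [NeZero k] (L : List (Fin n × ℝ)) (j : Fin n) (r : Fin k) :
    sFold n k L (j, r) = featAt j L (countDest j L - (r : ℕ)) := by
  induction L using List.reverseRecOn generalizing r with
  | nil =>
    have : countDest j ([] : List (Fin n × ℝ)) - (r : ℕ) = 0 := by simp [countDest]
    simp [sFold, this, featAt]
  | append_singleton L a ih =>
    obtain ⟨i, e⟩ := a
    unfold sFold at *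
    rw [List.foldl_append, List.foldl_cons, List.foldl_nil]
    by_cases hij : i = j
    · subst hij
      have hM : countDest i (L ++ [(i, e)]) = countDest i L + 1 := by
        simp [countDest]
      by_cases hr : r = 0
      · subst hr
        simp only [shiftInsert, if_pos rfl, hM]
        simp only [Fin.val_zero, Nat.sub_zero, featAt, List.filter_append, List.map_append]
        rw [List.getD_eq_getElem?_getD]
        simp [countDest, List.getElem?_append_right]
      · have hne : ((i, r) : Fin n × Fin k) ≠ (i, 0) := by
          simp [Prod.ext_iff, hr]
        simp only [shiftInsert, if_neg hne, if_pos rfl]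
        rw [ih (r - 1)]
        have hrpos : 1 ≤ (r : ℕ) := Nat.one_le_iff_ne_zero.mpr (by
          exact Fin.val_ne_zero_iff.mpr hr)
        have hv : ((r - 1 : Fin k) : ℕ) = (r : ℕ) - 1 := by
          have h1 : ((1 : Fin k) : ℕ) = 1 % k := rfl
          have hlt := r.is_lt
          rw [Fin.sub_def]
          have h2 : 1 % k = 1 := Nat.mod_eq_of_lt (by omega)
          simp only [h1, h2]
          have h3 : k - 1 + (r : ℕ) = ((r : ℕ) - 1) + k := by omega
          rw [h3, Nat.add_mod_right, Nat.mod_eq_of_lt (by omega)]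
        rw [hv, hM]
        have harith : countDest i L - ((r : ℕ) - 1) = countDest i L + 1 - (r : ℕ) := by
          omega
        rw [harith, featAt_append_le]
        · rfl
        · omega
    · have h1 : ((j, r) : Fin n × Fin k) ≠ (i, 0) := by
        simp [Prod.ext_iff]; intro h; exact absurd h.symm hij
      have hM : countDest j (L ++ [(i, e)]) = countDest j L := by
        simp [countDest, hij]
      simp only [shiftInsert, if_neg h1, if_neg (Ne.symm hij)]
      rw [ih r, hM, featAt_append_le]
      omega

/-- **Theorem 3, moving-average case.** For every event list `L`
and every `j`, the averaged block of the folded memory equals the order-`k`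
moving average (with zero padding) of the event features sent to `j`. -/
theorem sFold_moving_average (n k : ℕ) [NeZero n] [NeZero k]
    (L : List (Fin n × ℝ)) (j : Fin n) :
    (1 / (k : ℝ)) * ∑ r : Fin k, sFold n k L (j, r)
      = (1 / (k : ℝ)) * ∑ x ∈ Finset.range k, featAt j L (countDest j L - x) := by
  congr 1
  rw [← Fin.sum_univ_eq_sum_range (fun x => featAt j L (countDest j L - x)) k]
  exact Finset.sum_congr rfl fun r _ => sFold_slot n k L j r
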